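/- arXiv:2102.02776 — 3 statements merged into one kernel-verified Lean document; each statement's English description precedes it below -/
import Mathlib

section
/- Let (R, I) be a pseudo-adhesive pair and M an FP-approximated R-module. Then the I-power torsion of M is bounded: there exists n ≥ 0 such that M[I^∞] = M[I^n], i.e. every element of M annihilated by some power of I is annihilated by I^n. -/
open CategoryTheory AlgebraicGeometry Opposite Limits

universe w v u

set_option maxHeartbeats 1000000
set_option synthInstance.maxHeartbeats 400000

noncomputable section

/-! ## Algebraic preliminaries: pseudo-adhesive pairs and FP-approximated modules -/

/-- The open complement of the vanishing locus `V(I)` inside `Spec R`. -/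
def specComplementZeroLocus (R : Type u) [CommRing R] (I : Ideal R) :
    (Spec (CommRingCat.of R)).Opens :=
  ⟨(PrimeSpectrum.zeroLocus (I : Set R))ᶜ,
    (PrimeSpectrum.isClosed_zeroLocus (I : Set R)).isOpen_compl⟩

/-- An `R`-module `M` has bounded `I`-power torsion: there is `n ≥ 0` such that every
element killed by some power of `I` is killed by `I ^ n`. -/
def Module.HasBoundedTorsion (R : Type u) [CommRing R] (I : Ideal R)
    (M : Type v) [AddCommGroup M] [Module R M] : Prop :=
  ∃ n : ℕ, ∀ x : M, (∃ k : ℕ, ∀ a ∈ I ^ k, a • x = 0) → ∀ a ∈ I ^ n, a • x = 0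

/-- `(R, I)` is a pseudo-adhesive pair: `I` is finitely generated, `Spec R ∖ V(I)` is a
noetherian scheme, and every finite `R`-module has bounded `I`-power torsion. -/
structure IsPseudoAdhesivePair (R : Type u) [CommRing R] (I : Ideal R) : Prop where
  fg : I.FG
  isNoetherian : AlgebraicGeometry.IsNoetherian (specComplementZeroLocus R I).toScheme
  boundedTorsion : ∀ (M : Type u) [AddCommGroup M] [Module R M],
    Module.Finite R M → Module.HasBoundedTorsion R I M

/-- `(R, I)` is universally pseudo-adhesive if `(R[X₁, …, X_d], I·R[X₁, …, X_d])` is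
pseudo-adhesive for every `d ≥ 0`. -/
def IsUnivPseudoAdhesivePair (R : Type u) [CommRing R] (I : Ideal R) : Prop :=
  ∀ d : ℕ, IsPseudoAdhesivePair (MvPolynomial (Fin d) R)
    (I.map (MvPolynomial.C : R →+* MvPolynomial (Fin d) R))

/-- An `R`-module `M` is FP-approximated with respect to `I` if there are a finitely
presented `R`-module `G`, a linear map `φ : G →ₗ[R] M` and `n ≥ 0` such that `I ^ n`
annihilates both the kernel and the cokernel of `φ`. -/
def Module.IsFPApproximated (R : Type u) [CommRing R] (I : Ideal R)
    (M : Type v) [AddCommGroup M] [Module R M] : Prop :=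
  ∃ (G : Type v) (_ : AddCommGroup G) (_ : Module R G) (φ : G →ₗ[R] M) (n : ℕ),
    Module.FinitePresentation R G ∧
    (∀ a ∈ I ^ n, ∀ x : G, φ x = 0 → a • x = 0) ∧
    (∀ a ∈ I ^ n, ∀ y : M, a • y ∈ LinearMap.range φ)

/-- Let `(R, I)` be a pseudo-adhesive pair and `M` an FP-approximated
`R`-module. Then the `I`-power torsion of `M` is bounded: there exists `n ≥ 0` such that
every element of `M` annihilated by some power of `I` is annihilated by `I ^ n`. -/
theorem boundedTorsion_of_isFPApproximated
    (R : Type u) [CommRing R] (I : Ideal R) (hRI : IsPseudoAdhesivePair R I)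
    (M : Type v) [AddCommGroup M] [Module R M] (hM : Module.IsFPApproximated R I M) :
    ∃ n : ℕ, ∀ x : M, (∃ k : ℕ, ∀ a ∈ I ^ k, a • x = 0) → ∀ a ∈ I ^ n, a • x = 0 := by
  classical
  obtain ⟨G, _, _, φ, n, hfp, hker, hcoker⟩ := hM
  haveI : Module.Finite R G := inferInstance
  obtain ⟨m, f, hf⟩ := Module.Finite.exists_fin' R G
  -- transfer bounded torsion from a Type u model of G
  obtain ⟨n', hn'⟩ := hRI.boundedTorsion ((Fin m → R) ⧸ LinearMap.ker f) inferInstance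
  let e : ((Fin m → R) ⧸ LinearMap.ker f) ≃ₗ[R] G := f.quotKerEquivOfSurjective hf
  have hG : ∀ x : G, (∃ k : ℕ, ∀ a ∈ I ^ k, a • x = 0) → ∀ a ∈ I ^ n', a • x = 0 := by
    intro x hx a ha
    have : a • e.symm x = 0 := by
      apply hn' _ _ a ha
      obtain ⟨k, hk⟩ := hx
      exact ⟨k, fun b hb => by
        have : e (b • e.symm x) = 0 := by
          rw [map_smul, e.apply_symm_apply, hk b hb]
        simpa using congrArg e.symm this⟩
    have := congrArg e this
    rwa [map_smul, e.apply_symm_apply, map_zero] at this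
  refine ⟨n' + n, fun x hx c hc => ?_⟩
  obtain ⟨k, hk⟩ := hx
  rw [pow_add] at hc
  refine Submodule.mul_induction_on hc (fun b hb a ha => ?_) (fun y z hy hz => by
    rw [add_smul, hy, hz, add_zero])
  obtain ⟨g, hg⟩ := hcoker a ha x
  have hgt : ∀ d ∈ I ^ (n + k), d • g = 0 := by
    intro d hd
    rw [pow_add] at hd
    refine Submodule.mul_induction_on hd (fun p hp q hq => ?_) (fun y z hy hz => by
      rw [add_smul, hy, hz, add_zero])
    have hφ : φ (q • g) = 0 := by
      rw [map_smul, hg, smul_comm, hk q hq, smul_zero]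
    have := hker p hp (q • g) hφ
    rwa [smul_smul] at this
  have hbg : b • g = 0 := hG g ⟨n + k, hgt⟩ b hb
  have : φ (b • g) = 0 := by rw [hbg, map_zero]
  rw [map_smul, hg] at this
  rwa [smul_smul] at this

end
end

section
/- Let (R, I) be a universally pseudo-adhesive pair and S a finite type R-algebra. Then the pair (S, I·S) is universally pseudo-adhesive. -/
open CategoryTheory AlgebraicGeometry Opposite Limits

universe w v u

set_option maxHeartbeats 1000000
set_option synthInstance.maxHeartbeats 400000

noncomputable section

lemma isNoetherianRing_gamma_iff {X : Scheme.{u}} (U D : X.Opens) (hle : D ≤ U) :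
    IsNoetherianRing Γ(U.toScheme, U.ι ⁻¹ᵁ D) ↔ IsNoetherianRing Γ(X, D) := by
  have himg : U.ι ''ᵁ (U.ι ⁻¹ᵁ D) = D := by
    apply TopologicalSpace.Opens.ext
    apply Set.image_preimage_eq_of_subset
    rw [Scheme.Opens.range_ι]; exact hle
  have e := (Scheme.Hom.appIso U.ι (U.ι ⁻¹ᵁ D)).commRingCatIsoToRingEquiv
  rw [himg] at e
  exact ⟨fun hh => isNoetherianRing_of_ringEquiv _ e.symm, fun hh => isNoetherianRing_of_ringEquiv _ e⟩

lemma isNoetherianRing_gamma_basicOpen_iff (R : CommRingCat.{u}) (f : R) :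
    IsNoetherianRing Γ(Spec R, PrimeSpectrum.basicOpen f) ↔
      IsNoetherianRing (Localization.Away f) := by
  let A := StructureSheaf.openAlgebra R (op (PrimeSpectrum.basicOpen f))
  have L := StructureSheaf.IsLocalization.to_basicOpen R f
  have e' := @IsLocalization.algEquiv _ _ (Submonoid.powers f) _ _ A L (Localization.Away f) _ _ _
  have e := @AlgEquiv.toRingEquiv _ _ _ _ _ _ A _ e'
  exact ⟨fun hh => @isNoetherianRing_of_ringEquiv _ _ _ _ e hh, fun hh => @isNoetherianRing_of_ringEquiv _ _ _ _ e.symm hh⟩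

lemma isNoetherianRing_away_of_isNoetherian {A : Type u} [CommRing A] {J : Ideal A}
    (h : AlgebraicGeometry.IsNoetherian (specComplementZeroLocus A J).toScheme)
    {a : A} (ha : a ∈ J) : IsNoetherianRing (Localization.Away a) := by
  set U := specComplementZeroLocus A J with hU
  have hle : (PrimeSpectrum.basicOpen a : (Spec (CommRingCat.of A)).Opens) ≤ U := by
    intro x hx hxV
    exact hx (hxV ha)
  have hD :=
    IsAffineOpen.Spec_basicOpen (R := CommRingCat.of A) a
  let V : U.toScheme.affineOpens := (affineOpensRestrict U).symm ⟨⟨_, hD⟩, hle⟩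
  haveI := h.toIsLocallyNoetherian
  have h1 : IsNoetherianRing Γ(U.toScheme, V.1) := IsLocallyNoetherian.component_noetherian V
  exact (isNoetherianRing_gamma_basicOpen_iff (CommRingCat.of A) a).mp
    ((isNoetherianRing_gamma_iff U _ hle).mp h1)

lemma isNoetherian_specCompl {A : Type u} [CommRing A] (s : Finset A)
    (h : ∀ a ∈ s, IsNoetherianRing (Localization.Away a)) :
    AlgebraicGeometry.IsNoetherian (specComplementZeroLocus A (Ideal.span (s : Set A))).toScheme := by
  set U := specComplementZeroLocus A (Ideal.span (s : Set A)) with hU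
  have hle : ∀ a ∈ s, (PrimeSpectrum.basicOpen a : (Spec (CommRingCat.of A)).Opens) ≤ U := by
    intro a ha x hx hxV
    exact hx (hxV (Ideal.subset_span ha))
  have hD :=
    fun a : A => IsAffineOpen.Spec_basicOpen (R := CommRingCat.of A) a
  let V : s → U.toScheme.affineOpens := fun a =>
    (affineOpensRestrict U).symm ⟨⟨_, hD a.1⟩, hle a.1 a.2⟩
  have hsup : (⨆ i, ((V i : U.toScheme.affineOpens) : U.toScheme.Opens)) = ⊤ := by
    rw [eq_top_iff]
    intro x _
    rw [TopologicalSpace.Opens.mem_iSup]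
    have hx : x.1 ∈ U := x.2
    have hex : ∃ a ∈ s, a ∉ x.1.asIdeal := by
      by_contra hcon
      push_neg at hcon
      exact hx (fun b hb => Ideal.span_le.mpr hcon hb)
    obtain ⟨a, ha, hna⟩ := hex
    exact ⟨⟨a, ha⟩, hna⟩
  rw [isNoetherian_iff_of_finite_iSup_eq_top hsup]
  intro a
  exact (isNoetherianRing_gamma_iff U _ (hle a.1 a.2)).mpr
    ((isNoetherianRing_gamma_basicOpen_iff (CommRingCat.of A) a.1).mpr (h a.1 a.2))
lemma IsPseudoAdhesivePair.of_surjective {A B : Type u} [CommRing A] [CommRing B]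
    (f : A →+* B) (hf : Function.Surjective f) {J : Ideal A}
    (h : IsPseudoAdhesivePair A J) : IsPseudoAdhesivePair B (J.map f) := by
  classical
  obtain ⟨s, hs⟩ := h.fg
  refine ⟨h.fg.map f, ?_, ?_⟩
  · have hmap : J.map f = Ideal.span ((s.image f : Finset B) : Set B) := by
      rw [Finset.coe_image, ← Ideal.map_span, hs]
    rw [hmap]
    apply isNoetherian_specCompl
    intro b hb
    obtain ⟨a, ha, rfl⟩ := Finset.mem_image.mp hb
    haveI hA : IsNoetherianRing (Localization.Away a) :=
      isNoetherianRing_away_of_isNoetherian h.isNoetherian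
        (hs ▸ Ideal.subset_span ha : a ∈ J)
    haveI : IsLocalization ((Submonoid.powers a).map f) (Localization.Away (f a)) := by
      rw [Submonoid.map_powers]; infer_instance
    have hsurj : Function.Surjective (Localization.awayMap f a) :=
      IsLocalization.map_surjective_of_surjective _ _ _ hf
    exact isNoetherianRing_of_surjective (Localization.Away a) (Localization.Away (f a))
      (Localization.awayMap f a) hsurj
  · intro M _ _ hM
    letI : Algebra A B := f.toAlgebra
    letI : Module A M := Module.compHom M f
    haveI : IsScalarTower A B M :=
      ⟨fun a b m => by show (f a * b) • m = f a • b • m; rw [mul_smul]⟩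
    haveI : Module.Finite A B :=
      Module.Finite.of_surjective (Algebra.linearMap A B) hf
    haveI hfinA : Module.Finite A M := Module.Finite.trans B M
    obtain ⟨n, hn⟩ := h.boundedTorsion M hfinA
    refine ⟨n, fun x hx b hb => ?_⟩
    rw [← Ideal.map_pow] at hb
    obtain ⟨a, haJ, rfl⟩ := (Ideal.mem_map_iff_of_surjective f hf).mp hb
    have hxA : ∃ k : ℕ, ∀ c ∈ J ^ k, c • x = 0 := by
      obtain ⟨k, hk⟩ := hx
      exact ⟨k, fun c hc => hk (f c)
        (by rw [← Ideal.map_pow] at *; exact Ideal.mem_map_of_mem f hc)⟩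
    exact hn x hxA a haJ

/-- Let `(R, I)` be a universally pseudo-adhesive pair and `S` a finite
type `R`-algebra. Then the pair `(S, I·S)` is universally pseudo-adhesive. -/
theorem isUnivPseudoAdhesivePair_of_finiteType
    (R : Type u) [CommRing R] (I : Ideal R) (hRI : IsUnivPseudoAdhesivePair R I)
    (S : Type u) [CommRing S] [Algebra R S] (hS : Algebra.FiniteType R S) :
    IsUnivPseudoAdhesivePair S (I.map (algebraMap R S)) := by
  obtain ⟨n, g, hg⟩ := Algebra.FiniteType.iff_quotient_mvPolynomial''.mp hS
  intro d
  let F : MvPolynomial (Fin (d + n)) R →ₐ[R] MvPolynomial (Fin d) S :=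
    (MvPolynomial.mapAlgHom g).comp
      ((MvPolynomial.sumAlgEquiv R (Fin d) (Fin n)).toAlgHom.comp
        (MvPolynomial.renameEquiv R finSumFinEquiv.symm).toAlgHom)
  have hFsurj : Function.Surjective F := fun y => by
    obtain ⟨p, rfl⟩ := MvPolynomial.map_surjective g.toRingHom hg y
    obtain ⟨q, rfl⟩ := (MvPolynomial.sumAlgEquiv R (Fin d) (Fin n)).surjective p
    refine ⟨(MvPolynomial.renameEquiv R finSumFinEquiv.symm).symm q, ?_⟩
    show (MvPolynomial.mapAlgHom g) ((MvPolynomial.sumAlgEquiv R (Fin d) (Fin n))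
      ((MvPolynomial.renameEquiv R finSumFinEquiv.symm)
        ((MvPolynomial.renameEquiv R finSumFinEquiv.symm).symm q))) = _
    rw [AlgEquiv.apply_symm_apply]
    rfl
  have key := IsPseudoAdhesivePair.of_surjective F.toRingHom hFsurj (hRI (d + n))
  have heq : (I.map (MvPolynomial.C : R →+* MvPolynomial (Fin (d + n)) R)).map F.toRingHom
      = (I.map (algebraMap R S)).map (MvPolynomial.C : S →+* MvPolynomial (Fin d) S) := by
    rw [Ideal.map_map, Ideal.map_map]
    congr 1
    refine RingHom.ext fun r => ?_
    show F (MvPolynomial.C r) = MvPolynomial.C (algebraMap R S r)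
    have h1 : F (MvPolynomial.C r) = algebraMap R (MvPolynomial (Fin d) S) r := by
      rw [← MvPolynomial.algebraMap_eq]; exact F.commutes r
    rw [h1, IsScalarTower.algebraMap_apply R S (MvPolynomial (Fin d) S),
      MvPolynomial.algebraMap_eq]
  rw [heq] at key
  exact key


end
end

section
/- Let (R, I) be a universally pseudo-adhesive pair and J ⊆ I a finitely generated ideal of R contained in I. Then the pair (R, J) is universally pseudo-adhesive. -/
open CategoryTheory AlgebraicGeometry Opposite Limits

universe w v u

set_option maxHeartbeats 1000000
set_option synthInstance.maxHeartbeats 400000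

noncomputable section

namespace PseudoAdhesiveAux

variable {A : Type u} [CommRing A]

lemma le_opens {I J : Ideal A} (h : J ≤ I) :
    specComplementZeroLocus A J ≤ specComplementZeroLocus A I := by
  intro x hx hmem
  exact hx (PrimeSpectrum.zeroLocus_anti_mono (by exact_mod_cast h) hmem)

lemma isNoetherian_of_le {I J : Ideal A} (h : J ≤ I)
    (hI : AlgebraicGeometry.IsNoetherian (specComplementZeroLocus A I).toScheme) :
    AlgebraicGeometry.IsNoetherian (specComplementZeroLocus A J).toScheme := by
  haveI := hI
  set X := Spec (CommRingCat.of A)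
  let f := X.homOfLE (le_opens h)
  haveI : IsLocallyNoetherian (specComplementZeroLocus A J).toScheme :=
    isLocallyNoetherian_of_isOpenImmersion f
  haveI : TopologicalSpace.NoetherianSpace (specComplementZeroLocus A J).toScheme :=
    f.isOpenEmbedding.toIsInducing.noetherianSpace
  exact ⟨⟩

lemma helper1 {R : CommRingCat.{u}} (g : ↥R)
    [inst : IsNoetherianRing ↥(Γ(Spec R, PrimeSpectrum.basicOpen g))] :
    IsNoetherianRing (Localization.Away g) := by
  letI := IsAffineOpen.instAlgebraCarrierObjOppositeOpensCarrierCarrierCommRingCatSpecPresheafOpOpens (R := R) (U := PrimeSpectrum.basicOpen g)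
  haveI := IsAffineOpen.instAwayCarrierObjOppositeOpensCarrierCarrierCommRingCatSpecPresheafOpOpensBasicOpen (R := R) (f := g)
  exact isNoetherianRing_of_ringEquiv ↥(Γ(Spec R, PrimeSpectrum.basicOpen g))
    (IsLocalization.algEquiv (Submonoid.powers g)
      ↥(Γ(Spec R, PrimeSpectrum.basicOpen g)) (Localization.Away g)).toRingEquiv

lemma isNoetherianRing_away {I : Ideal A} (g : A) (hg : g ∈ I)
    (hI : AlgebraicGeometry.IsNoetherian (specComplementZeroLocus A I).toScheme) :
    IsNoetherianRing (Localization.Away g) := by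
  haveI := hI
  set R := CommRingCat.of A
  have hle : (PrimeSpectrum.basicOpen g : (Spec R).Opens) ≤ specComplementZeroLocus A I := by
    intro p hp hmem
    exact hp (hmem hg)
  haveI : IsLocallyNoetherian (Scheme.Opens.toScheme (X := Spec R) (PrimeSpectrum.basicOpen g)) :=
    @isLocallyNoetherian_of_isOpenImmersion _ _ ((Spec R).homOfLE hle)
      (instIsOpenImmersionHomOfLE _ hle) _
  haveI : IsAffine (Scheme.Opens.toScheme (X := Spec R) (PrimeSpectrum.basicOpen g)) :=
    IsAffineOpen.Spec_basicOpen (R := R) g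
  haveI h1 : IsNoetherianRing Γ((Scheme.Opens.toScheme (X := Spec R) (PrimeSpectrum.basicOpen g)), ⊤) :=
    IsLocallyNoetherian.component_noetherian ⟨⊤, isAffineOpen_top _⟩
  haveI h2 : IsNoetherianRing Γ(Spec R, PrimeSpectrum.basicOpen g) :=
    isNoetherianRing_of_ringEquiv Γ((Scheme.Opens.toScheme (X := Spec R) (PrimeSpectrum.basicOpen g)), ⊤)
      (Scheme.Opens.topIso (X := Spec R) (PrimeSpectrum.basicOpen g)).commRingCatIsoToRingEquiv
  exact helper1 (R := R) g

lemma exists_finset_cover {I : Ideal A}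
    (hI : AlgebraicGeometry.IsNoetherian (specComplementZeroLocus A I).toScheme) :
    ∃ s : Finset A, (↑s : Set A) ⊆ I ∧ I ≤ (Ideal.span (↑s : Set A)).radical := by
  classical
  haveI := hI
  haveI : TopologicalSpace.NoetherianSpace (specComplementZeroLocus A I).toScheme :=
    inferInstance
  have hcomp : IsCompact ((PrimeSpectrum.zeroLocus (I : Set A))ᶜ) := by
    rw [isCompact_iff_compactSpace]
    exact (inferInstance : CompactSpace (specComplementZeroLocus A I).toScheme)
  obtain ⟨t, ht⟩ := hcomp.elim_finite_subcover
    (fun g : ↥(I : Set A) => ((PrimeSpectrum.basicOpen (g : A) :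
        TopologicalSpace.Opens (PrimeSpectrum A)) : Set (PrimeSpectrum A)))
    (fun g => (PrimeSpectrum.basicOpen (g : A)).isOpen)
    (by
      intro p hp
      have hp' : ¬ (I : Set A) ⊆ ↑p.asIdeal := fun hsub =>
        hp ((PrimeSpectrum.mem_zeroLocus _ _).mpr hsub)
      obtain ⟨g, hgI, hgp⟩ := Set.not_subset.mp hp'
      exact Set.mem_iUnion.mpr ⟨⟨g, hgI⟩, hgp⟩)
  refine ⟨t.image Subtype.val, ?_, ?_⟩
  · intro g hg
    obtain ⟨g', _, rfl⟩ := Finset.mem_image.mp hg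
    exact g'.2
  · intro a ha
    rw [Ideal.radical_eq_sInf]
    refine Submodule.mem_sInf.mpr fun p hp => ?_
    by_contra hap
    have hIp : ¬ (I : Set A) ⊆ ↑p := fun h => hap (h ha)
    have hmem : (⟨p, hp.2⟩ : PrimeSpectrum A) ∈ (PrimeSpectrum.zeroLocus (I : Set A))ᶜ :=
      fun h => hIp ((PrimeSpectrum.mem_zeroLocus _ _).mp h)
    obtain ⟨g, hgt, hgb⟩ := Set.mem_iUnion₂.mp (ht hmem)
    have hgsp : (g : A) ∈ Ideal.span ((t.image Subtype.val : Finset A) : Set A) :=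
      Ideal.subset_span (Finset.mem_coe.mpr (Finset.mem_image_of_mem _ hgt))
    exact (PrimeSpectrum.mem_basicOpen _ _).mp hgb (hp.1 hgsp)

lemma localized_bound {g : A} (hg : IsNoetherianRing (Localization.Away g)) (J : Ideal A)
    (M : Type u) [AddCommGroup M] [Module A M] [Module.Finite A M] :
    ∃ m : ℕ, ∀ x : M, (∃ k, ∀ a ∈ J ^ k, a • x = 0) →
      ∀ a ∈ J ^ m, ∃ e : ℕ, g ^ e • a • x = 0 := by
  haveI := hg
  set S := Submonoid.powers g
  set B := Localization.Away g
  set N := LocalizedModule S M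
  haveI : Module.Finite B N :=
    Module.Finite.of_isLocalizedModule S (LocalizedModule.mkLinearMap S M)
  haveI : IsNoetherian B N := isNoetherian_of_isNoetherianRing_of_finite B N
  let T : ℕ →o Submodule B N :=
    ⟨fun k => Submodule.torsionBySet B N (algebraMap A B '' ((J ^ k : Ideal A) : Set A)),
     by
      intro k l hkl
      exact Submodule.torsionBySet_le_torsionBySet_of_subset
        (Set.image_mono (Ideal.pow_le_pow_right hkl))⟩
  obtain ⟨m, hmst⟩ := monotone_stabilizes_iff_noetherian.mpr (inferInstance : IsNoetherian B N) T
  refine ⟨m, fun x hx a ha => ?_⟩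
  obtain ⟨k, hk⟩ := hx
  have hxk : LocalizedModule.mk x 1 ∈ T k := by
    show LocalizedModule.mk x 1 ∈
      Submodule.torsionBySet B N (algebraMap A B '' ((J ^ k : Ideal A) : Set A))
    rw [Submodule.mem_torsionBySet_iff]
    rintro ⟨b, a', ha', rfl⟩
    show algebraMap A B a' • LocalizedModule.mk x (1 : S) = 0
    rw [algebraMap_smul, LocalizedModule.smul'_mk, hk a' ha', LocalizedModule.zero_mk]
  have hxm : LocalizedModule.mk x 1 ∈ T m := by
    rcases le_total k m with h | h
    · exact T.monotone h hxk
    · rw [hmst k h]; exact hxk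
  have hxm' : LocalizedModule.mk x 1 ∈
      Submodule.torsionBySet B N (algebraMap A B '' ((J ^ m : Ideal A) : Set A)) := hxm
  have h0 : algebraMap A B a • LocalizedModule.mk x (1 : S) = 0 :=
    (Submodule.mem_torsionBySet_iff _ _).mp hxm' ⟨algebraMap A B a, a, ha, rfl⟩
  rw [algebraMap_smul, LocalizedModule.smul'_mk] at h0
  rw [← LocalizedModule.zero_mk (1 : S)] at h0
  obtain ⟨u, hu⟩ := LocalizedModule.mk_eq.mp h0
  obtain ⟨e, he⟩ := u.2
  refine ⟨e, ?_⟩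
  have hu' : (u : A) • (a • x) = 0 := by simpa [Submonoid.smul_def] using hu
  have he' : g ^ e = (u : A) := he
  rw [he']
  exact hu'

lemma hasBoundedTorsion_of_le {I J : Ideal A}
    (hI : IsPseudoAdhesivePair A I) (hJI : J ≤ I)
    (M : Type u) [AddCommGroup M] [Module A M] (hM : Module.Finite A M) :
    Module.HasBoundedTorsion A J M := by
  classical
  haveI := hM
  obtain ⟨nI, hnI⟩ := hI.boundedTorsion M hM
  obtain ⟨s, hsI, hsrad⟩ := exists_finset_cover hI.isNoetherian
  have key : ∀ g : A, g ∈ s → ∃ m : ℕ, ∀ x : M, (∃ k, ∀ a ∈ J ^ k, a • x = 0) →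
      ∀ a ∈ J ^ m, ∃ e : ℕ, g ^ e • a • x = 0 := fun g hg =>
    localized_bound (isNoetherianRing_away g (hsI hg) hI.isNoetherian) J M
  choose mf hmf using key
  set m : ℕ := s.attach.sup (fun g => mf g.1 g.2) with hm
  refine ⟨nI + m, fun x hx => ?_⟩
  have hmain : J ^ nI * J ^ m ≤ Ideal.torsionOf A M x := by
    rw [Ideal.mul_le]
    intro r hr a ha
    have hgy : ∀ g : {g // g ∈ s}, ∃ e : ℕ, g.1 ^ e • a • x = 0 := fun g =>
      hmf g.1 g.2 x hx a
        (Ideal.pow_le_pow_right (Finset.le_sup (Finset.mem_attach s g)) ha)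
    choose ef hef using hgy
    set y := a • x with hy
    have hIy : ∃ K, ∀ c ∈ I ^ K, c • y = 0 := by
      set P : Ideal A := Ideal.span (Set.range (fun g : {g // g ∈ s} => g.1 ^ ef g)) with hP
      have hPy : P ≤ Ideal.torsionOf A M y := by
        rw [hP, Ideal.span_le]
        rintro c ⟨gg, rfl⟩
        exact (Ideal.mem_torsionOf_iff _ _).mpr (hef gg)
      have hrad : I ≤ P.radical := by
        have h1 : Ideal.span (↑s : Set A) ≤ P.radical := by
          rw [Ideal.span_le]
          intro g hg
          exact ⟨ef ⟨g, hg⟩, Ideal.subset_span ⟨⟨g, hg⟩, rfl⟩⟩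
        calc I ≤ (Ideal.span (↑s : Set A)).radical := hsrad
          _ ≤ P.radical.radical := Ideal.radical_mono h1
          _ = P.radical := Ideal.radical_idem _
      obtain ⟨K, hK⟩ := Ideal.exists_pow_le_of_le_radical_of_fg hrad hI.fg
      exact ⟨K, fun c hc => (Ideal.mem_torsionOf_iff _ _).mp (hPy (hK hc))⟩
    have hIk := hnI y hIy
    have hrI : r ∈ I ^ nI := Ideal.pow_right_mono hJI nI hr
    exact (Ideal.mem_torsionOf_iff _ _).mpr (by rw [mul_smul]; exact hIk r hrI)
  intro a ha
  have ha' : a ∈ J ^ nI * J ^ m := by rw [← pow_add]; exact ha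
  exact (Ideal.mem_torsionOf_iff _ _).mp (hmain ha')

lemma isPseudoAdhesivePair_of_le {I J : Ideal A}
    (hI : IsPseudoAdhesivePair A I) (hJfg : J.FG) (hJI : J ≤ I) :
    IsPseudoAdhesivePair A J :=
  ⟨hJfg, isNoetherian_of_le hJI hI.isNoetherian,
    fun M _ _ hM => hasBoundedTorsion_of_le hI hJI M hM⟩

end PseudoAdhesiveAux


/-- Let `(R, I)` be a universally pseudo-adhesive pair and `J ⊆ I` a
finitely generated ideal contained in `I`. Then `(R, J)` is universally pseudo-adhesive. -/
theorem isUnivPseudoAdhesivePair_of_le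
    (R : Type u) [CommRing R] (I : Ideal R) (hRI : IsUnivPseudoAdhesivePair R I)
    (J : Ideal R) (hJ : J.FG) (hJI : J ≤ I) :
    IsUnivPseudoAdhesivePair R J := fun d =>
  PseudoAdhesiveAux.isPseudoAdhesivePair_of_le (hRI d)
    (Ideal.FG.map hJ _) (Ideal.map_mono hJI)

end
end
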